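/- Let A, B be linearly independent vectors in ℝ², let a, b, c, d be integers with a·d − b·c ≠ 0, set C = a•A + b•B and D = c•A + d•B, and let K be the additive subgroup of ℝ² generated by {C, D}. Let m be the smallest positive integer such that m•A ∈ K and m•B ∈ K, and let L be the additive subgroup generated by {m•A, m•B}. Then L ≤ K, and the index of L in K (the relative index) equals m² / |a·d − b·c|. -/

import Mathlib

open Matrix

/-- The index of a full-rank submodule of `ι → ℤ` is the absolute value of the determinant
of the composite of an equivalence with the inclusion. -/
lemma aux_index_det {ι : Type*} [Fintype ι] [DecidableEq ι]
    (N : Submodule ℤ (ι → ℤ)) (e : (ι → ℤ) ≃ₗ[ℤ] N) :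
    N.toAddSubgroup.index =
      (LinearMap.det (N.subtype ∘ₗ (e : (ι → ℤ) →ₗ[ℤ] N))).natAbs := by
  obtain ⟨n, snf⟩ := N.smithNormalForm (Pi.basisFun ℤ ι)
  have hn : n = Fintype.card ι := by
    have := Fintype.card_congr (snf.bN.indexEquiv ((Pi.basisFun ℤ ι).map e))
    simpa using this
  have hf : Function.Bijective snf.f := by
    rw [Fintype.bijective_iff_injective_and_card]
    exact ⟨snf.f.injective, by simp [hn]⟩
  let σ : Fin n ≃ ι := Equiv.ofBijective snf.f hf
  let e' : (ι → ℤ) ≃ₗ[ℤ] N := snf.bM.equiv snf.bN σ.symm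
  have h1 : N.toAddSubgroup.index = ∏ i : Fin n, (snf.a i).natAbs := by
    rw [snf.toAddSubgroup_index_eq_ite, if_pos hn]
    congr 1
    ext i
    rw [Ideal.span_singleton_toAddSubgroup_eq_zmultiples, Int.index_zmultiples]
  have hassoc : (LinearMap.det (N.subtype ∘ₗ (e : (ι → ℤ) →ₗ[ℤ] N))).natAbs
      = (LinearMap.det (N.subtype ∘ₗ (e' : (ι → ℤ) →ₗ[ℤ] N))).natAbs :=
    Int.natAbs_eq_iff_associated.mpr (LinearMap.associated_det_comp_equiv _ e e')
  have hmat : LinearMap.toMatrix snf.bM snf.bM (N.subtype ∘ₗ (e' : (ι → ℤ) →ₗ[ℤ] N))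
      = Matrix.diagonal (fun i => snf.a (σ.symm i)) := by
    ext i j
    rw [LinearMap.toMatrix_apply]
    have hg : (N.subtype ∘ₗ (e' : (ι → ℤ) →ₗ[ℤ] N)) (snf.bM j)
        = snf.a (σ.symm j) • snf.bM j := by
      simp only [LinearMap.comp_apply, LinearEquiv.coe_coe, Module.Basis.equiv_apply, e',
        Submodule.coe_subtype]
      rw [snf.snf]
      congr 1
      exact congrArg snf.bM (σ.apply_symm_apply j)
    rw [hg, _root_.map_smul, Module.Basis.repr_self, Finsupp.smul_single, smul_eq_mul, mul_one]
    by_cases h : i = j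
    · rw [h, Matrix.diagonal_apply_eq, Finsupp.single_eq_same]
    · rw [Matrix.diagonal_apply_ne _ h, Finsupp.single_eq_of_ne h]
  have hdet : LinearMap.det (N.subtype ∘ₗ (e' : (ι → ℤ) →ₗ[ℤ] N)) = ∏ i : Fin n, snf.a i := by
    rw [← LinearMap.det_toMatrix snf.bM, hmat, Matrix.det_diagonal]
    exact Equiv.prod_comp σ.symm snf.a
  rw [h1, hassoc, hdet]
  exact (map_prod Int.natAbsHom snf.a Finset.univ).symm

/-- The index of the lattice spanned by the columns of an integer matrix is `|det|`. -/
lemma aux_index_matrix {n : ℕ} (M : Matrix (Fin n) (Fin n) ℤ) (hM : M.det ≠ 0) :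
    (LinearMap.range (Matrix.toLin' M)).toAddSubgroup.index = M.det.natAbs := by
  have hker : LinearMap.ker (Matrix.toLin' M) = ⊥ := by
    rw [Matrix.ker_toLin'_eq_bot_iff]
    intro v hv
    have h1 : M.adjugate *ᵥ (M *ᵥ v) = M.det • v := by
      rw [Matrix.mulVec_mulVec, Matrix.adjugate_mul, Matrix.smul_mulVec, Matrix.one_mulVec]
    rw [hv, Matrix.mulVec_zero] at h1
    have := smul_eq_zero.mp h1.symm
    tauto
  have hinj : Function.Injective (Matrix.toLin' M) := LinearMap.ker_eq_bot.mp hker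
  rw [aux_index_det _ (LinearEquiv.ofInjective (Matrix.toLin' M) hinj)]
  congr 1
  have h2 : (LinearMap.range (Matrix.toLin' M)).subtype ∘ₗ
      ((LinearEquiv.ofInjective (Matrix.toLin' M) hinj : _ ≃ₗ[ℤ] _) : _ →ₗ[ℤ] _)
      = Matrix.toLin' M := by
    ext v
    rfl
  rw [h2, LinearMap.det_toLin']

/-- Remark 1: the cover `E/L → E/K` is `n`-fold with `n = [K : L] = m² / |ad - bc|`,
where `m` is the smallest positive integer with `m • A, m • B ∈ K` and
`L = ⟨m • A, m • B⟩`. -/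
theorem stmt11 (A B : ℝ × ℝ) (hAB : LinearIndependent ℝ ![A, B])
    (a b c d : ℤ) (hdet : a * d - b * c ≠ 0)
    (C D : ℝ × ℝ) (hC : C = a • A + b • B) (hD : D = c • A + d • B)
    (K : AddSubgroup (ℝ × ℝ)) (hK : K = AddSubgroup.closure ({C, D} : Set (ℝ × ℝ)))
    (m : ℕ) (hm : 0 < m) (hmA : m • A ∈ K) (hmB : m • B ∈ K)
    (hmin : ∀ k : ℕ, 0 < k → k • A ∈ K → k • B ∈ K → m ≤ k)
    (L : AddSubgroup (ℝ × ℝ))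
    (hL : L = AddSubgroup.closure ({m • A, m • B} : Set (ℝ × ℝ))) :
    L ≤ K ∧ L.relIndex K = m ^ 2 / (a * d - b * c).natAbs := by
  classical
  have hLK : L ≤ K := by
    rw [hL, AddSubgroup.closure_le]
    rintro x hx
    simp only [Set.mem_insert_iff, Set.mem_singleton_iff] at hx
    rcases hx with rfl | rfl
    · exact hmA
    · exact hmB
  refine ⟨hLK, ?_⟩
  let φ : (Fin 2 → ℤ) →+ ℝ × ℝ :=
    { toFun := fun v => v 0 • A + v 1 • B
      map_zero' := by simp
      map_add' := fun v w => by
        simp only [Pi.add_apply, add_zsmul]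
        abel }
  have hφ : ∀ v : Fin 2 → ℤ, φ v = v 0 • A + v 1 • B := fun _ => rfl
  have hφinj : Function.Injective φ := by
    rw [injective_iff_map_eq_zero]
    intro v hv
    rw [hφ] at hv
    have h2 : ((v 0 : ℝ)) • A + ((v 1 : ℝ)) • B = 0 := by
      rw [Int.cast_smul_eq_zsmul, Int.cast_smul_eq_zsmul]; exact hv
    obtain ⟨h3, h4⟩ := LinearIndependent.pair_iff.mp hAB _ _ h2
    funext i
    fin_cases i
    · exact_mod_cast h3
    · exact_mod_cast h4
  have hrange : ∀ p q r s : ℤ,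
      (LinearMap.range (Matrix.toLin' !![p, r; q, s])).toAddSubgroup
        = AddSubgroup.closure {![p, q], ![r, s]} := by
    intro p q r s
    have hs : Set.range (!![p, r; q, s]).col = {![p, q], ![r, s]} := by
      ext x
      simp only [Set.mem_insert_iff, Set.mem_singleton_iff, Set.mem_range]
      constructor
      · rintro ⟨i, rfl⟩
        fin_cases i
        · left; funext j; fin_cases j <;> rfl
        · right; funext j; fin_cases j <;> rfl
      · rintro (rfl | rfl)
        · exact ⟨0, by funext j; fin_cases j <;> rfl⟩
        · exact ⟨1, by funext j; fin_cases j <;> rfl⟩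
    rw [Matrix.range_toLin', hs, ← Submodule.span_int_eq_addSubgroupClosure]
  set MK : Matrix (Fin 2) (Fin 2) ℤ := !![a, c; b, d] with hMK
  set ML : Matrix (Fin 2) (Fin 2) ℤ := !![(m : ℤ), 0; 0, (m : ℤ)] with hML
  have hdetK : MK.det = a * d - b * c := by
    simp [hMK, Matrix.det_fin_two_of]; ring
  have hdetL : ML.det = (m : ℤ) ^ 2 := by
    simp [hML, Matrix.det_fin_two_of]; ring
  set K₀ : AddSubgroup (Fin 2 → ℤ) := (LinearMap.range (Matrix.toLin' MK)).toAddSubgroup with hK₀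
  set L₀ : AddSubgroup (Fin 2 → ℤ) := (LinearMap.range (Matrix.toLin' ML)).toAddSubgroup with hL₀
  have hK₀c : K₀ = AddSubgroup.closure {![a, b], ![c, d]} := hrange a b c d
  have hL₀c : L₀ = AddSubgroup.closure {![(m : ℤ), 0], ![0, (m : ℤ)]} := hrange (m : ℤ) 0 0 (m : ℤ)
  have hφab : φ ![a, b] = C := by
    rw [hφ, hC]; simp
  have hφcd : φ ![c, d] = D := by
    rw [hφ, hD]; simp
  have hφm0 : φ ![(m : ℤ), 0] = m • A := by
    rw [hφ]; simp
  have hφ0m : φ ![0, (m : ℤ)] = m • B := by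
    rw [hφ]; simp
  have hmapK : K₀.map φ = K := by
    rw [hK₀c, AddMonoidHom.map_closure, hK]
    congr 1
    rw [Set.image_insert_eq, Set.image_singleton, hφab, hφcd]
  have hmapL : L₀.map φ = L := by
    rw [hL₀c, AddMonoidHom.map_closure, hL]
    congr 1
    rw [Set.image_insert_eq, Set.image_singleton, hφm0, hφ0m]
  have hmem : ∀ v : Fin 2 → ℤ, φ v ∈ K → v ∈ K₀ := by
    intro v hv
    rw [← hmapK] at hv
    obtain ⟨w, hw, hwv⟩ := hv
    exact hφinj hwv ▸ hw
  have hL₀K₀ : L₀ ≤ K₀ := by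
    rw [hL₀c, AddSubgroup.closure_le]
    rintro x hx
    simp only [Set.mem_insert_iff, Set.mem_singleton_iff] at hx
    rcases hx with rfl | rfl
    · exact hmem _ (hφm0 ▸ hmA)
    · exact hmem _ (hφ0m ▸ hmB)
  have h5 : L.relIndex K = L₀.relIndex K₀ := by
    rw [← hmapK, ← hmapL, ← AddSubgroup.relIndex_comap (AddSubgroup.map φ L₀) φ K₀,
      AddSubgroup.comap_map_eq_self_of_injective hφinj]
  have hKidx : K₀.index = (a * d - b * c).natAbs := by
    rw [hK₀, aux_index_matrix MK (by rw [hdetK]; exact hdet), hdetK]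
  have hLidx : L₀.index = m ^ 2 := by
    rw [hL₀, aux_index_matrix ML (by rw [hdetL]; positivity), hdetL]
    simp [Int.natAbs_pow]
  have h6 := AddSubgroup.relIndex_mul_index hL₀K₀
  rw [hKidx, hLidx] at h6
  rw [h5]
  exact (Nat.div_eq_of_eq_mul_left (Int.natAbs_pos.mpr hdet) h6.symm).symm
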